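/- arXiv:1111.4148 — 4 statements merged into one kernel-verified Lean document; each statement's English description precedes it below -/
import Mathlib

section
/- Let V₁, V₂, ... be i.i.d. Beta(1, λ) random variables and define stick-breaking weights π_h = V_h ∏_{j<h}(1-V_j). Then for any H ≥ 1 and ε ∈ (0,1), P(∑_{h>H} π_h > ε) ≤ ((eλ/H)·log(1/ε))^H. -/
open MeasureTheory Real ProbabilityTheory

/-- Stick-breaking tail mass bound: if `V₀, V₁, …` are i.i.d. `Beta(1, λ)` and
`π_h = V_h ∏_{j<h} (1 - V_j)`, then for any `H ≥ 1` and `ε ∈ (0,1)`,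
`P(∑_{h ≥ H} pw_h > ε) ≤ ((e λ / H) log(1/ε))^H`. -/
theorem stick_breaking_tail_mass
    {Ω : Type} [MeasurableSpace Ω] (μ : Measure Ω) [IsProbabilityMeasure μ]
    (lam : ℝ) (hlam : 0 < lam)
    (V : ℕ → Ω → ℝ) (hVm : ∀ h, Measurable (V h))
    (hindep : iIndepFun V μ)
    (hlaw : ∀ h, μ.map (V h) =
      volume.withDensity (fun v =>
        ENNReal.ofReal (if v ∈ Set.Ioo (0 : ℝ) 1 then lam * (1 - v) ^ (lam - 1) else 0)))
    (pw : ℕ → Ω → ℝ)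
    (hpw : ∀ h ω, pw h ω = V h ω * ∏ j ∈ Finset.range h, (1 - V j ω))
    (H : ℕ) (hH : 1 ≤ H) (ε : ℝ) (hε : ε ∈ Set.Ioo (0 : ℝ) 1) :
    μ {ω | ε < ∑' k : ℕ, pw (H + k) ω} ≤
      ENNReal.ofReal ((Real.exp 1 * lam / H * Real.log (1 / ε)) ^ H) := by
  obtain ⟨hε0, hε1⟩ := hε
  set t : ℝ := Real.log (1 / ε) with ht_def
  have ht : 0 < t := Real.log_pos (by rw [lt_div_iff₀ hε0]; linarith)
  have hHpos : (0 : ℝ) < H := by exact_mod_cast Nat.lt_of_lt_of_le Nat.zero_lt_one hH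
  by_cases hcase : 1 ≤ Real.exp 1 * lam / H * t
  · calc μ {ω | ε < ∑' k : ℕ, pw (H + k) ω} ≤ 1 := prob_le_one
      _ ≤ ENNReal.ofReal ((Real.exp 1 * lam / H * t) ^ H) := by
          rw [← ENNReal.ofReal_one]
          exact ENNReal.ofReal_le_ofReal (one_le_pow₀ hcase)
  push_neg at hcase
  rw [div_mul_eq_mul_div, div_lt_one hHpos] at hcase
  -- hcase : Real.exp 1 * lam * t < H
  have he1 : 1 < Real.exp 1 := by
    have := Real.exp_one_gt_d9; linarith
  have hlt : lam * t < (H : ℝ) := by nlinarith [mul_pos hlam ht]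
  set s : ℝ := (H : ℝ) / t - lam with hs_def
  have hs : 0 < s := by
    rw [hs_def, sub_pos, lt_div_iff₀ ht]
    linarith
  have hls : lam + s = (H : ℝ) / t := by rw [hs_def]; ring
  have hlspos : 0 < lam + s := by rw [hls]; positivity
  -- the ENNReal-valued factors
  set g : ℝ → ENNReal := fun v => ENNReal.ofReal ((1 - v) ^ s) with hg_def
  have hgm : Measurable g :=
    ENNReal.measurable_ofReal.comp ((measurable_const.sub measurable_id).pow measurable_const)
  -- almost surely all V h are in (0,1)
  have hnull : ∀ h, μ {ω | V h ω ∉ Set.Ioo (0 : ℝ) 1} = 0 := by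
    intro h
    have hset : {ω | V h ω ∉ Set.Ioo (0 : ℝ) 1} = V h ⁻¹' (Set.Ioo (0 : ℝ) 1)ᶜ := rfl
    rw [hset, ← Measure.map_apply (hVm h) measurableSet_Ioo.compl, hlaw h,
      withDensity_apply _ measurableSet_Ioo.compl]
    have h0 : ∫⁻ v in (Set.Ioo (0:ℝ) 1)ᶜ,
        ENNReal.ofReal (if v ∈ Set.Ioo (0:ℝ) 1 then lam * (1 - v) ^ (lam - 1) else 0) ∂volume =
        ∫⁻ _ in (Set.Ioo (0:ℝ) 1)ᶜ, (0 : ENNReal) ∂volume := by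
      apply setLIntegral_congr_fun measurableSet_Ioo.compl ?_
      intro v hv
      simp only [Set.mem_compl_iff] at hv
      beta_reduce
      rw [if_neg hv, ENNReal.ofReal_zero]
    rw [h0, lintegral_zero]
  have hgood : ∀ᵐ ω ∂μ, ∀ h, V h ω ∈ Set.Ioo (0 : ℝ) 1 := by
    rw [ae_all_iff]
    intro h
    exact ae_iff.mpr (hnull h)
  -- the single-factor expectation
  have hdm : Measurable (fun v : ℝ =>
      ENNReal.ofReal (if v ∈ Set.Ioo (0 : ℝ) 1 then lam * (1 - v) ^ (lam - 1) else 0)) := by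
    apply ENNReal.measurable_ofReal.comp
    exact Measurable.ite measurableSet_Ioo
      (measurable_const.mul ((measurable_const.sub measurable_id).pow measurable_const))
      measurable_const
  have hexp : (-1 : ℝ) < lam + s - 1 := by linarith
  have hone : ∀ h, ∫⁻ ω, g (V h ω) ∂μ = ENNReal.ofReal (lam / (lam + s)) := by
    intro h
    rw [← lintegral_map hgm (hVm h), hlaw h, lintegral_withDensity_eq_lintegral_mul _ hdm hgm]
    have hrw : (fun v : ℝ =>
        ((fun v : ℝ => ENNReal.ofReal
            (if v ∈ Set.Ioo (0 : ℝ) 1 then lam * (1 - v) ^ (lam - 1) else 0)) * g) v) =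
        Set.indicator (Set.Ioo (0 : ℝ) 1)
          (fun v => ENNReal.ofReal (lam * (1 - v) ^ (lam + s - 1))) := by
      funext v
      by_cases hv : v ∈ Set.Ioo (0 : ℝ) 1
      · have h1v : 0 < 1 - v := by linarith [hv.2]
        simp only [Pi.mul_apply, Set.indicator_of_mem hv, if_pos hv, hg_def]
        rw [← ENNReal.ofReal_mul (by positivity)]
        congr 1
        rw [mul_assoc, ← Real.rpow_add h1v]
        ring_nf
      · rw [Pi.mul_apply, Set.indicator_of_notMem hv, if_neg hv, ENNReal.ofReal_zero,
          zero_mul]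
    rw [hrw, lintegral_indicator measurableSet_Ioo]
    have hint : IntegrableOn (fun v : ℝ => lam * (1 - v) ^ (lam + s - 1))
        (Set.Ioo 0 1) volume := by
      have h1 : IntervalIntegrable (fun x : ℝ => x ^ (lam + s - 1)) volume 0 1 :=
        intervalIntegral.intervalIntegrable_rpow' hexp
      have h2 : IntervalIntegrable (fun x : ℝ => (1 - x) ^ (lam + s - 1)) volume 0 1 := by
        have := (h1.comp_sub_left 1).symm
        simpa using this
      have h3 := h2.const_mul lam
      have h4 : IntegrableOn (fun v : ℝ => lam * (1 - v) ^ (lam + s - 1))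
          (Set.Ioc 0 1) volume := by
        rw [← intervalIntegrable_iff_integrableOn_Ioc_of_le zero_le_one]
        exact h3
      exact h4.mono_set Set.Ioo_subset_Ioc_self
    rw [← ofReal_integral_eq_lintegral_ofReal hint
      ((ae_restrict_iff' measurableSet_Ioo).mpr (ae_of_all _ fun v hv =>
        mul_nonneg hlam.le (Real.rpow_nonneg (by linarith [hv.2]) _)))]
    congr 1
    have hIoo : ∫ v in Set.Ioo (0:ℝ) 1, lam * (1 - v) ^ (lam + s - 1) ∂volume =
        ∫ v in (0:ℝ)..1, lam * (1 - v) ^ (lam + s - 1) := by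
      rw [intervalIntegral.integral_of_le zero_le_one, integral_Ioc_eq_integral_Ioo]
    rw [hIoo, intervalIntegral.integral_const_mul]
    have hsub : (∫ x in (0:ℝ)..1, (1 - x) ^ (lam + s - 1)) =
        ∫ x in (0:ℝ)..1, x ^ (lam + s - 1) := by
      have := intervalIntegral.integral_comp_sub_left
        (fun x : ℝ => x ^ (lam + s - 1)) 1 (a := 0) (b := 1)
      simpa using this
    rw [hsub, integral_rpow (Or.inl hexp)]
    rw [Real.one_rpow, Real.zero_rpow (by linarith)]
    field_simp
    rw [sub_zero, one_mul, sub_add_cancel, div_self hlspos.ne']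
  -- product of factors over range H
  set gV : ℕ → Ω → ENNReal := fun j ω => g (V j ω) with hgV_def
  have hgVm : ∀ j, Measurable (gV j) := fun j => hgm.comp (hVm j)
  have hgVindep : iIndepFun gV μ :=
    hindep.comp (fun _ => g) (fun _ => hgm)
  have hprod : ∀ n, ∫⁻ ω, ∏ j ∈ Finset.range n, gV j ω ∂μ =
      ENNReal.ofReal (lam / (lam + s)) ^ n := by
    intro n
    induction n with
    | zero => simp
    | succ n ih =>
      have hind : IndepFun (∏ j ∈ Finset.range n, gV j) (gV n) μ :=
        hgVindep.indepFun_prod_range_succ hgVm n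
      have hind' : IndepFun (fun ω => ∏ j ∈ Finset.range n, gV j ω) (gV n) μ := by
        have : (fun ω => ∏ j ∈ Finset.range n, gV j ω) = ∏ j ∈ Finset.range n, gV j := by
          funext ω; simp
        rw [this]; exact hind
      simp_rw [Finset.prod_range_succ]
      rw [lintegral_mul_eq_lintegral_mul_lintegral_of_indepFun''
        (Finset.measurable_prod _ fun i _ => hgVm i).aemeasurable
        (hgVm n).aemeasurable hind', ih, hone n, pow_succ]
  set G : Ω → ENNReal := fun ω => ∏ j ∈ Finset.range H, gV j ω with hG_def
  have hGm : Measurable G := Finset.measurable_prod _ fun i _ => hgVm i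
  have hmarkov := mul_meas_ge_le_lintegral₀ (μ := μ) hGm.aemeasurable (ENNReal.ofReal (ε ^ s))
  rw [hprod H] at hmarkov
  -- event inclusion
  have hsub : μ {ω | ε < ∑' k : ℕ, pw (H + k) ω} ≤
      μ {ω | ENNReal.ofReal (ε ^ s) ≤ G ω} := by
    apply measure_mono_ae
    filter_upwards [hgood] with ω hω hmem
    have hpos : ∀ j, 0 < 1 - V j ω := fun j => by
      have := (hω j).2; linarith
    set f : ℕ → ℝ := fun m => ∏ j ∈ Finset.range (H + m), (1 - V j ω) with hf_def
    have hfpos : ∀ m, 0 < f m := fun m => Finset.prod_pos fun j _ => hpos j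
    have htsum : (∑' k : ℕ, pw (H + k) ω) ≤ f 0 := by
      apply Real.tsum_le_of_sum_range_le
      · intro k
        rw [hpw]
        exact le_of_lt (mul_pos (hω _).1 (Finset.prod_pos fun j _ => hpos j))
      · intro n
        have hterm : ∀ k, pw (H + k) ω = f k - f (k + 1) := by
          intro k
          rw [hpw, hf_def]
          simp only
          have hnat : H + (k + 1) = (H + k) + 1 := by omega
          rw [hnat, Finset.prod_range_succ]
          ring
        calc ∑ k ∈ Finset.range n, pw (H + k) ω
            = ∑ k ∈ Finset.range n, (f k - f (k + 1)) :=
              Finset.sum_congr rfl fun k _ => hterm k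
          _ = f 0 - f n := Finset.sum_range_sub' f n
          _ ≤ f 0 := by linarith [hfpos n]
    have hεP : ε < f 0 := lt_of_lt_of_le hmem htsum
    have hf0 : f 0 = ∏ j ∈ Finset.range H, (1 - V j ω) := by simp [hf_def]
    show ENNReal.ofReal (ε ^ s) ≤ G ω
    have h1 : ε ^ s ≤ (f 0) ^ s := Real.rpow_le_rpow hε0.le hεP.le hs.le
    have h2 : (f 0) ^ s = ∏ j ∈ Finset.range H, (1 - V j ω) ^ s := by
      rw [hf0]
      exact (Real.finset_prod_rpow _ _ (fun j _ => (hpos j).le) s).symm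
    have h3 : G ω = ENNReal.ofReal (∏ j ∈ Finset.range H, (1 - V j ω) ^ s) := by
      rw [ENNReal.ofReal_prod_of_nonneg (fun j _ => Real.rpow_nonneg (hpos j).le s)]
    rw [h3]
    exact ENNReal.ofReal_le_ofReal (h2 ▸ h1)
  -- from Markov to the bound
  have hεspos : 0 < ε ^ s := Real.rpow_pos_of_pos hε0 s
  have ha0 : ENNReal.ofReal (ε ^ s) ≠ 0 := (ENNReal.ofReal_pos.mpr hεspos).ne'
  have hat : ENNReal.ofReal (ε ^ s) ≠ ⊤ := ENNReal.ofReal_ne_top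
  have hbound : μ {ω | ENNReal.ofReal (ε ^ s) ≤ G ω} ≤
      ENNReal.ofReal (lam / (lam + s)) ^ H / ENNReal.ofReal (ε ^ s) := by
    rw [ENNReal.le_div_iff_mul_le (Or.inl ha0) (Or.inl hat)]
    rw [mul_comm]
    exact hmarkov
  refine le_trans (le_trans hsub hbound) ?_
  rw [← ENNReal.ofReal_pow (div_nonneg hlam.le hlspos.le),
    ← ENNReal.ofReal_div_of_pos hεspos]
  apply ENNReal.ofReal_le_ofReal
  -- final real inequality
  have hlogε : Real.log ε = -t := by
    rw [ht_def, one_div, Real.log_inv, neg_neg]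
  have hεs : ε ^ s = Real.exp (-(t * s)) := by
    rw [Real.rpow_def_of_pos hε0, hlogε]; ring_nf
  have hts : t * s = (H : ℝ) - t * lam := by
    rw [hs_def, mul_sub, mul_div_cancel₀ _ (ne_of_gt ht)]
  have hfrac : lam / (lam + s) = lam * t / H := by
    rw [hls]
    field_simp
  have h2 : (Real.exp 1 * lam / H * t) ^ H = (lam * t / H) ^ H * Real.exp 1 ^ H := by
    rw [← mul_pow]; ring_nf
  rw [hfrac, hεs, div_eq_mul_inv, ← Real.exp_neg, neg_neg, hts, h2, Real.exp_one_pow]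
  have hbase : 0 ≤ (lam * t / H) ^ H := by positivity
  have hexple : Real.exp ((H : ℝ) - t * lam) ≤ Real.exp (H : ℝ) :=
    Real.exp_le_exp.mpr (by nlinarith [mul_pos ht hlam])
  exact mul_le_mul_of_nonneg_left hexple hbase
end

section
/- For every pair of probability densities p and q, the Kullback-Leibler divergence satisfies ∫ p log(p/q) ≲ h²(p,q)·(1 + log‖p/q‖_∞), where h is the Hellinger distance and ‖p/q‖_∞ is the essential supremum of p/q. -/
open MeasureTheory Real

theorem core_t_aux (t L : ℝ) (ht : 0 < t) (hL : 0 ≤ L) (h2 : 2 * Real.log t ≤ L) :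
    2 * t ^ 2 * Real.log t - t ^ 2 + 1 ≤ 13 * (1 + L) * (t - 1) ^ 2 := by
  rcases le_or_gt t 1 with h1 | h1
  · have hl : Real.log t ≤ t - 1 := Real.log_le_sub_one_of_pos ht
    nlinarith [mul_nonneg hL (sq_nonneg (t - 1)), sq_nonneg (t - 1),
      mul_le_mul_of_nonneg_left hl (by positivity : (0:ℝ) ≤ 2 * t ^ 2),
      mul_nonneg (mul_nonneg ht.le ht.le) (sub_nonneg.2 h1)]
  rcases le_or_gt t 3 with h3 | h3
  · set s := Real.sqrt t with hs
    have hs2 : s ^ 2 = t := Real.sq_sqrt ht.le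
    have hs1 : 1 ≤ s := by nlinarith [Real.sqrt_nonneg t]
    have hsle : s ≤ 2 := by nlinarith [Real.sqrt_nonneg t]
    have hlog : Real.log t ≤ 2 * (s - 1) := by
      have h := Real.log_le_sub_one_of_pos (show (0:ℝ) < s by linarith)
      have := Real.log_sqrt ht.le
      rw [← hs] at this
      linarith
    nlinarith [mul_nonneg hL (sq_nonneg (t - 1)), sq_nonneg (s - 1),
      mul_le_mul_of_nonneg_left hlog (by positivity : (0:ℝ) ≤ 2 * t ^ 2),
      mul_nonneg (mul_nonneg (sq_nonneg (s-1)) (sub_nonneg.2 hsle)) (sub_nonneg.2 hs1)]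
  · have hlogpos : 0 < Real.log t := Real.log_pos (by linarith)
    nlinarith [mul_le_mul_of_nonneg_left h2 (sq_nonneg t), sq_nonneg (t-1),
      mul_nonneg hL (sq_nonneg (t-1)),
      mul_le_mul_of_nonneg_left h2 (sq_nonneg (t-1)),
      mul_nonneg hlogpos.le (mul_nonneg (sub_nonneg.2 h3.le) (by linarith : (0:ℝ) ≤ t + 3))]

theorem pointwise_kl_aux (a b M : ℝ) (ha : 0 ≤ a) (hb : 0 ≤ b) (hM : 1 ≤ M)
    (hab : a / b ≤ M) :
    a * Real.log (a / b) - a + b ≤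
      13 * (1 + Real.log M) * (Real.sqrt a - Real.sqrt b) ^ 2 := by
  have hLM : 0 ≤ Real.log M := Real.log_nonneg hM
  have hC : (1:ℝ) ≤ 13 * (1 + Real.log M) := by linarith
  rcases eq_or_lt_of_le hb with hb0 | hb0
  · rw [← hb0, div_zero, Real.log_zero, mul_zero]
    have : (0:ℝ) ≤ 13 * (1 + Real.log M) * (Real.sqrt a - Real.sqrt 0) ^ 2 := by positivity
    linarith
  rcases eq_or_lt_of_le ha with ha0 | ha0
  · rw [← ha0]
    simp only [zero_div, Real.log_zero, mul_zero, zero_sub, Real.sqrt_zero, neg_sq,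
      Real.sq_sqrt hb, zero_add]
    nlinarith
  · set t := Real.sqrt (a / b) with htdef
    have htpos : 0 < t := Real.sqrt_pos.2 (div_pos ha0 hb0)
    have ht2 : t ^ 2 = a / b := Real.sq_sqrt (le_of_lt (div_pos ha0 hb0))
    have hab' : a = t ^ 2 * b := by
      rw [ht2]; field_simp
    have hsa : Real.sqrt a = t * Real.sqrt b := by
      rw [htdef, ← Real.sqrt_mul (by positivity) b, div_mul_cancel₀]
      exact hb0.ne'
    have hlogt : Real.log (a / b) = 2 * Real.log t := by
      rw [← ht2, show t ^ 2 = t * t by ring, Real.log_mul htpos.ne' htpos.ne']; ring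
    have h2L : 2 * Real.log t ≤ Real.log M := by
      rw [← hlogt]
      exact Real.log_le_log (div_pos ha0 hb0) hab
    have hcore := core_t_aux t (Real.log M) htpos hLM h2L
    have hsq : (Real.sqrt a - Real.sqrt b) ^ 2 = (t - 1) ^ 2 * b := by
      rw [hsa]
      have : Real.sqrt b ^ 2 = b := Real.sq_sqrt hb
      nlinarith [this]
    rw [hsq, hlogt, hab']
    have := mul_le_mul_of_nonneg_right hcore hb
    nlinarith [this]

/-- For every pair of probability densities `p, q` (w.r.t. a common σ-finite measure `μ`) with
`‖p/q‖_∞` finite, the Kullback–Leibler divergence satisfies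
`∫ p log(p/q) ≲ h²(p,q) (1 + log ‖p/q‖_∞)` with a universal constant. -/
theorem kl_le_hellinger_sq : ∃ C > (0 : ℝ),
    ∀ (α : Type) (_ : MeasurableSpace α) (μ : Measure α), SigmaFinite μ →
    ∀ (p q : α → ℝ), Measurable p → Measurable q →
    (∀ x, 0 ≤ p x) → (∀ x, 0 ≤ q x) →
    (∫ x, p x ∂μ = 1) → (∫ x, q x ∂μ = 1) →
    Integrable (fun x => (Real.sqrt (p x) - Real.sqrt (q x)) ^ 2) μ →
    Integrable (fun x => p x * Real.log (p x / q x)) μ →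
    ∀ M : ℝ, 1 ≤ M → essSup (fun x => p x / q x) μ = M →
    ∫ x, p x * Real.log (p x / q x) ∂μ ≤
      C * (∫ x, (Real.sqrt (p x) - Real.sqrt (q x)) ^ 2 ∂μ) * (1 + Real.log M) := by
  refine ⟨13, by norm_num, ?_⟩
  intro α mα μ hσ p q hpm hqm hp0 hq0 hp1 hq1 hg_int hf_int M hM hess
  have hp_int : Integrable p μ := integrable_of_integral_eq_one hp1
  have hq_int : Integrable q μ := integrable_of_integral_eq_one hq1
  -- the ratio is a.e. bounded by M
  have hbdd : Filter.IsBoundedUnder (· ≤ ·) (ae μ) (fun x => p x / q x) := by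
    by_contra hb
    have hset : {a : ℝ | ∀ᶠ x in ae μ, p x / q x ≤ a} = ∅ := by
      rw [Set.eq_empty_iff_forall_notMem]
      intro a ha
      exact hb ⟨a, Filter.eventually_map.mpr ha⟩
    have h0 : essSup (fun x => p x / q x) μ =
        sInf {a : ℝ | ∀ᶠ x in ae μ, p x / q x ≤ a} := Filter.limsup_eq
    rw [hess, hset, Real.sInf_empty] at h0
    linarith
  have h_ae : ∀ᵐ x ∂μ, p x / q x ≤ M := by
    have h := ae_le_essSup (μ := μ) (f := fun x => p x / q x) hbdd
    rw [hess] at h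
    exact h
  -- pointwise comparison a.e.
  have h_pt : ∀ᵐ x ∂μ,
      p x * Real.log (p x / q x) - p x + q x ≤
        13 * (1 + Real.log M) * ((Real.sqrt (p x) - Real.sqrt (q x)) ^ 2) :=
    h_ae.mono fun x hx => pointwise_kl_aux (p x) (q x) M (hp0 x) (hq0 x) hM hx
  have h1a : Integrable (fun x => p x * Real.log (p x / q x) - p x) μ := hf_int.sub hp_int
  have h1 : Integrable (fun x => p x * Real.log (p x / q x) - p x + q x) μ := h1a.add hq_int
  have h2 : Integrable
      (fun x => 13 * (1 + Real.log M) * ((Real.sqrt (p x) - Real.sqrt (q x)) ^ 2)) μ :=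
    hg_int.const_mul _
  have hle := integral_mono_ae h1 h2 h_pt
  rw [integral_add h1a hq_int, integral_sub hf_int hp_int,
    integral_const_mul, hp1, hq1] at hle
  have hgnn : 0 ≤ ∫ x, (Real.sqrt (p x) - Real.sqrt (q x)) ^ 2 ∂μ :=
    integral_nonneg fun x => sq_nonneg _
  nlinarith [hle]
end

section
/- For every pair of probability densities p and q, ∫ p (log(p/q))² ≲ h²(p,q)·(1 + log‖p/q‖_∞)². -/
open MeasureTheory Real

lemma core {s M : ℝ} (hs : 0 < s) (hM : 1 ≤ M) (hsM : s^2 ≤ M) :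
    |s * Real.log s| ≤ 2 * |s - 1| * (1 + Real.log M) := by
  have hlogM : 0 ≤ Real.log M := Real.log_nonneg hM
  rcases le_or_gt s 1 with h1 | h1
  · have hls : Real.log s ≤ 0 := Real.log_nonpos hs.le h1
    have hinv : Real.log (1/s) ≤ 1/s - 1 := Real.log_le_sub_one_of_pos (by positivity)
    rw [one_div, Real.log_inv] at hinv
    have key : -(s * Real.log s) ≤ 1 - s := by
      have := mul_le_mul_of_nonneg_left hinv hs.le
      have h2 : s * (s⁻¹ - 1) = 1 - s := by field_simp
      nlinarith
    have habs1 : |s * Real.log s| = -(s * Real.log s) := by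
      rw [abs_of_nonpos]; exact mul_nonpos_of_nonneg_of_nonpos hs.le hls
    have habs2 : |s - 1| = 1 - s := by rw [abs_of_nonpos]; ring; linarith
    rw [habs1, habs2]; nlinarith
  · have hls : 0 ≤ Real.log s := Real.log_nonneg h1.le
    have habs1 : |s * Real.log s| = s * Real.log s := abs_of_nonneg (by positivity)
    have habs2 : |s - 1| = s - 1 := abs_of_nonneg (by linarith)
    rw [habs1, habs2]
    rcases le_or_gt s 2 with h2 | h2
    · have := Real.log_le_sub_one_of_pos hs
      nlinarith
    · have hlog2 : Real.log (s^2) ≤ Real.log M :=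
        Real.log_le_log (by positivity) hsM
      rw [Real.log_pow] at hlog2
      push_cast at hlog2
      have hlsM : Real.log s ≤ 1 + Real.log M := by linarith
      nlinarith

lemma key {a b : ℝ} (M : ℝ) (hM : 1 ≤ M) (ha : 0 ≤ a) (hb : 0 ≤ b) (hab : a / b ≤ M) :
    a * (Real.log (a / b)) ^ 2 ≤
      16 * (1 + Real.log M)^2 * (Real.sqrt a - Real.sqrt b) ^ 2 := by
  have hlogM : 0 ≤ Real.log M := Real.log_nonneg hM
  rcases eq_or_lt_of_le hb with hb0 | hb0
  · rw [← hb0, div_zero, Real.log_zero]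
    nlinarith [sq_nonneg (Real.sqrt a - Real.sqrt 0), sq_nonneg (1 + Real.log M)]
  rcases eq_or_lt_of_le ha with ha0 | ha0
  · rw [← ha0, zero_div, Real.log_zero]
    nlinarith [sq_nonneg (Real.sqrt 0 - Real.sqrt b), sq_nonneg (1 + Real.log M)]
  set s := Real.sqrt (a / b) with hs_def
  have hs : 0 < s := Real.sqrt_pos.2 (by positivity)
  have hs2 : s ^ 2 = a / b := Real.sq_sqrt (by positivity)
  have hcore := core hs hM (hs2 ▸ hab)
  have hsa : Real.sqrt a = Real.sqrt b * s := by
    rw [hs_def, ← Real.sqrt_mul hb, mul_div_cancel₀ _ (ne_of_gt hb0)]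
  have hab2 : a = b * s ^ 2 := by rw [hs2]; field_simp
  have hlog : Real.log (a / b) = 2 * Real.log s := by
    rw [← hs2, Real.log_pow]; push_cast; ring
  rw [hlog, hsa, hab2]
  have hsq : (s * Real.log s)^2 ≤ (2 * |s - 1| * (1 + Real.log M))^2 := by
    calc (s * Real.log s)^2 = |s * Real.log s|^2 := (sq_abs _).symm
      _ ≤ (2 * |s - 1| * (1 + Real.log M))^2 := by
          apply pow_le_pow_left₀ (abs_nonneg _) hcore
  have habs : |s - 1|^2 = (s - 1)^2 := sq_abs _
  have : b * s ^ 2 * (2 * Real.log s) ^ 2 = 4 * b * (s * Real.log s)^2 := by ring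
  rw [this]
  have h2 : (Real.sqrt b * s - Real.sqrt b)^2 = b * (s-1)^2 := by
    have : (Real.sqrt b * s - Real.sqrt b)^2 = Real.sqrt b ^2 * (s-1)^2 := by ring
    rw [this, Real.sq_sqrt hb]
  rw [h2]
  have e : (2 * |s - 1| * (1 + Real.log M))^2 = 4*(s-1)^2*(1+Real.log M)^2 := by
    rw [mul_pow, mul_pow, sq_abs]; ring
  rw [e] at hsq
  nlinarith [mul_le_mul_of_nonneg_left hsq (by positivity : (0:ℝ) ≤ 4*b)]


/-- For every pair of probability densities `p, q` (w.r.t. a common σ-finite measure `μ`) with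
`‖p/q‖_∞` finite, `∫ p (log(p/q))² ≲ h²(p,q) (1 + log ‖p/q‖_∞)²` with a universal constant. -/
theorem kl_var_le_hellinger_sq : ∃ C > (0 : ℝ),
    ∀ (α : Type) (_ : MeasurableSpace α) (μ : Measure α), SigmaFinite μ →
    ∀ (p q : α → ℝ), Measurable p → Measurable q →
    (∀ x, 0 ≤ p x) → (∀ x, 0 ≤ q x) →
    (∫ x, p x ∂μ = 1) → (∫ x, q x ∂μ = 1) →
    Integrable (fun x => (Real.sqrt (p x) - Real.sqrt (q x)) ^ 2) μ →
    Integrable (fun x => p x * (Real.log (p x / q x)) ^ 2) μ →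
    ∀ M : ℝ, 1 ≤ M → essSup (fun x => p x / q x) μ = M →
    ∫ x, p x * (Real.log (p x / q x)) ^ 2 ∂μ ≤
      C * (∫ x, (Real.sqrt (p x) - Real.sqrt (q x)) ^ 2 ∂μ) * (1 + Real.log M) ^ 2 := by
  refine ⟨16, by norm_num, ?_⟩
  intro α mα μ hσ p q hp hq hp0 hq0 hip hiq hIh hIkl M hM hess
  have hbdd : Filter.IsBoundedUnder (· ≤ ·) (ae μ) (fun x => p x / q x) := by
    by_contra h
    have he : essSup (fun x => p x / q x) μ = 0 := by
      rw [essSup, Filter.limsup, Filter.limsSup]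
      have hempty : {a : ℝ | ∀ᶠ n in Filter.map (fun x => p x / q x) (ae μ), n ≤ a} = ∅ := by
        rw [Set.eq_empty_iff_forall_notMem]
        intro a ha
        exact h ⟨a, ha⟩
      rw [hempty, Real.sInf_empty]
    rw [hess] at he; linarith
  have hae : ∀ᵐ x ∂μ, p x / q x ≤ M := by
    filter_upwards [ae_le_essSup hbdd] with x hx
    rwa [hess] at hx
  have hmono : ∀ᵐ x ∂μ, p x * (Real.log (p x / q x)) ^ 2 ≤
      (16 * (1 + Real.log M)^2) * ((Real.sqrt (p x) - Real.sqrt (q x)) ^ 2) := by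
    filter_upwards [hae] with x hx
    have := key M hM (hp0 x) (hq0 x) hx
    linarith [this]
  calc ∫ x, p x * (Real.log (p x / q x)) ^ 2 ∂μ
      ≤ ∫ x, (16 * (1 + Real.log M)^2) * ((Real.sqrt (p x) - Real.sqrt (q x)) ^ 2) ∂μ :=
        integral_mono_ae hIkl (hIh.const_mul _) hmono
    _ = (16 * (1 + Real.log M)^2) * ∫ x, (Real.sqrt (p x) - Real.sqrt (q x)) ^ 2 ∂μ :=
        integral_const_mul _ _
    _ = 16 * (∫ x, (Real.sqrt (p x) - Real.sqrt (q x)) ^ 2 ∂μ) * (1 + Real.log M) ^ 2 := by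
        ring
end

section
/- For a probability density p₀ on ℝ^d that is twice continuously differentiable with finite integrals ∫(‖∇p₀‖/p₀)⁴p₀ dλ and ∫(‖∇²p₀‖₂/p₀)²p₀ dλ, the smoothed density p_σ(x) = ∫p₀(x-σy)φ(y)dy satisfies ∫ (ṗ_σ(x))⁴ / p_σ(x)³ dx ≤ ∫(‖∇p₀‖/p₀)⁴ p₀ dλ · ∫‖y‖⁴φ(y)dy, where ṗ_σ(x) = -∫ y·∇p₀(x-σy) φ(y)dy is the derivative of p_σ with respect to σ. -/
open MeasureTheory Real
open scoped RealInnerProductSpace ENNReal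

noncomputable def stdGauss (d : ℕ) (y : EuclideanSpace ℝ (Fin d)) : ℝ :=
  (2 * π) ^ (-(d : ℝ) / 2) * Real.exp (-‖y‖ ^ 2 / 2)

lemma stdGauss_pos {d : ℕ} (y : EuclideanSpace ℝ (Fin d)) : 0 < stdGauss d y := by
  unfold stdGauss
  positivity

lemma stdGauss_continuous (d : ℕ) : Continuous (stdGauss d) := by
  unfold stdGauss
  fun_prop

lemma integrable_exp_quarter (d : ℕ) :
    Integrable (fun v : EuclideanSpace ℝ (Fin d) => Real.exp (-(1/4) * ‖v‖ ^ 2)) := by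
  have h := (GaussianFourier.integrable_cexp_neg_mul_sq_norm_add
    (V := EuclideanSpace ℝ (Fin d)) (b := (1/4 : ℂ)) (by norm_num) 0 0).re
  refine h.congr (Filter.Eventually.of_forall fun v => ?_)
  simp only [zero_mul, add_zero]
  rw [show -(1/4:ℂ) * (‖v‖:ℂ)^2 = ((-(1/4) * ‖v‖^2 : ℝ) : ℂ) by push_cast; ring]
  exact Complex.exp_ofReal_re _

lemma integrable_norm_pow_stdGauss (d : ℕ) :
    Integrable (fun y : EuclideanSpace ℝ (Fin d) => ‖y‖ ^ 4 * stdGauss d y) := by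
  have key : ∀ y : EuclideanSpace ℝ (Fin d),
      ‖y‖ ^ 4 * stdGauss d y ≤ (2 * π) ^ (-(d : ℝ) / 2) * (64 * Real.exp (-(1/4) * ‖y‖ ^ 2)) := by
    intro y
    set t : ℝ := ‖y‖ ^ 2 with ht
    have ht0 : 0 ≤ t := sq_nonneg _
    have h1 : ‖y‖ ^ 4 ≤ 64 * Real.exp (t / 4) := by
      have h2 : (1 + t/8) ^ 2 ≤ Real.exp (t/4) := by
        have := Real.add_one_le_exp (t/8)
        calc (1 + t/8)^2 ≤ (Real.exp (t/8))^2 := by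
              apply pow_le_pow_left₀ (by positivity) (by linarith) 2
          _ = Real.exp (t/4) := by rw [← Real.exp_nat_mul]; ring_nf
        -- fallback
      have h3 : ‖y‖ ^ 4 = t ^ 2 := by rw [ht]; ring
      nlinarith [sq_nonneg (t/8), Real.exp_pos (t/4)]
    have h4 : Real.exp (-t / 2) = Real.exp (-t/4) * Real.exp (-(1/4) * t) := by
      rw [← Real.exp_add]; ring_nf
    unfold stdGauss
    have hc : (0:ℝ) < (2 * π) ^ (-(d : ℝ) / 2) := by positivity
    rw [← ht, h4]
    have h5 : ‖y‖ ^ 4 * Real.exp (-t/4) ≤ 64 := by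
      have := mul_le_mul_of_nonneg_right h1 (Real.exp_pos (-t/4)).le
      calc ‖y‖^4 * Real.exp (-t/4) ≤ 64 * Real.exp (t/4) * Real.exp (-t/4) := this
        _ = 64 := by
              rw [mul_assoc, ← Real.exp_add, show t/4 + -t/4 = 0 by ring, Real.exp_zero, mul_one]
    calc ‖y‖ ^ 4 * ((2*π) ^ (-(d:ℝ)/2) * (Real.exp (-t/4) * Real.exp (-(1/4)*t)))
        = (2*π) ^ (-(d:ℝ)/2) * ((‖y‖^4 * Real.exp (-t/4)) * Real.exp (-(1/4)*t)) := by ring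
      _ ≤ (2*π) ^ (-(d:ℝ)/2) * (64 * Real.exp (-(1/4)*t)) := by
          apply mul_le_mul_of_nonneg_left _ hc.le
          exact mul_le_mul_of_nonneg_right h5 (Real.exp_pos _).le
  have hint : Integrable (fun y : EuclideanSpace ℝ (Fin d) =>
      (2 * π) ^ (-(d : ℝ) / 2) * (64 * Real.exp (-(1/4) * ‖y‖ ^ 2))) :=
    ((integrable_exp_quarter d).const_mul 64).const_mul _
  refine hint.mono' ?_ (Filter.Eventually.of_forall fun y => ?_)
  · exact (Continuous.mul (by fun_prop) (stdGauss_continuous d)).aestronglyMeasurable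
  · rw [Real.norm_of_nonneg (mul_nonneg (by positivity) (stdGauss_pos y).le)]
    exact key y

/-- For a twice continuously differentiable probability density `p₀` on `ℝ^d` with the stated
finite moment integrals, the smoothed density `p_σ(x) = ∫ p₀(x - σ y) φ(y) dy` and its
`σ`-derivative `ṗ_σ(x) = -∫ ⟪y, ∇p₀(x - σ y)⟫ φ(y) dy` satisfy
`∫ ṗ_σ⁴ / p_σ³ ≤ ∫ (‖∇p₀‖/p₀)⁴ p₀ ⬝ ∫ ‖y‖⁴ φ(y) dy`. -/
theorem smoothed_derivative_fourth_moment_bound (d : ℕ)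
    (p₀ : EuclideanSpace ℝ (Fin d) → ℝ)
    (hsmooth : ContDiff ℝ 2 p₀)
    (hp0 : ∀ x, 0 ≤ p₀ x) (hp1 : ∫ x, p₀ x = 1)
    (hmom1 : Integrable (fun x => (‖gradient p₀ x‖ / p₀ x) ^ 4 * p₀ x))
    (hmom2 : Integrable (fun x => (‖fderiv ℝ (fderiv ℝ p₀) x‖ / p₀ x) ^ 2 * p₀ x))
    (σ : ℝ) (hσ : 0 < σ) :
    ∫ x, (-∫ y, ⟪y, gradient p₀ (x - σ • y)⟫ * stdGauss d y) ^ 4 /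
        (∫ y, p₀ (x - σ • y) * stdGauss d y) ^ 3 ≤
      (∫ x, (‖gradient p₀ x‖ / p₀ x) ^ 4 * p₀ x) * ∫ y, ‖y‖ ^ 4 * stdGauss d y := by
  classical
  set φ := stdGauss d with hφdef
  set g := gradient p₀ with hgdef
  set Q : EuclideanSpace ℝ (Fin d) → ℝ := fun z => (‖g z‖ / p₀ z) ^ 4 * p₀ z with hQdef
  have hp₀c : Continuous p₀ := hsmooth.continuous
  have hgc : Continuous g := by
    rw [hgdef]
    unfold gradient
    exact (InnerProductSpace.toDual ℝ _).symm.continuous.comp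
      (hsmooth.continuous_fderiv (by norm_num))
  have hgz : ∀ z, p₀ z = 0 → g z = 0 := by
    intro z hz
    have hmin : IsLocalMin p₀ z := Filter.Eventually.of_forall fun w => by
      rw [hz]; exact hp0 w
    have h0 : fderiv ℝ p₀ z = 0 := hmin.fderiv_eq_zero
    rw [hgdef]
    unfold gradient
    rw [h0]; exact map_zero _
  have hφm : Measurable φ := (stdGauss_continuous d).measurable
  have hφpos : ∀ y, 0 < φ y := stdGauss_pos
  have hQm : Measurable Q :=
    ((hgc.norm.measurable.div hp₀c.measurable).pow_const 4).mul hp₀c.measurable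
  have hQnn : ∀ z, 0 ≤ Q z := fun z =>
    mul_nonneg (pow_nonneg (div_nonneg (norm_nonneg _) (hp0 z)) 4) (hp0 z)
  set Aenn := ∫⁻ x, ENNReal.ofReal (Q x) with hAdef
  set Benn := ∫⁻ y, ENNReal.ofReal (‖y‖ ^ 4 * φ y) with hBdef
  have hA : ENNReal.ofReal (∫ x, Q x) = Aenn :=
    ofReal_integral_eq_lintegral_ofReal hmom1 (Filter.Eventually.of_forall hQnn)
  have hB : ENNReal.ofReal (∫ y, ‖y‖ ^ 4 * φ y) = Benn :=
    ofReal_integral_eq_lintegral_ofReal (integrable_norm_pow_stdGauss d)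
      (Filter.Eventually.of_forall fun y => mul_nonneg (by positivity) (hφpos y).le)
  set G : EuclideanSpace ℝ (Fin d) → ℝ≥0∞ :=
    fun x => ∫⁻ y, ENNReal.ofReal (‖y‖ ^ 4 * Q (x - σ • y) * φ y) with hGdef
  -- the key pointwise inequality
  have key : ∀ x : EuclideanSpace ℝ (Fin d),
      ENNReal.ofReal ((-∫ y, ⟪y, g (x - σ • y)⟫ * φ y) ^ 4 /
        (∫ y, p₀ (x - σ • y) * φ y) ^ 3) ≤ G x := by
    intro x
    set D : ℝ := ∫ y, ⟪y, g (x - σ • y)⟫ * φ y with hDdef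
    set p : ℝ := ∫ y, p₀ (x - σ • y) * φ y with hpdef
    have hp_nn : 0 ≤ p := integral_nonneg fun y => mul_nonneg (hp0 _) (hφpos y).le
    rcases eq_or_lt_of_le hp_nn with hpz | hppos
    · rw [← hpz]
      norm_num
    · have hInt : Integrable (fun y => p₀ (x - σ • y) * φ y) := by
        by_contra hc
        have : p = 0 := by rw [hpdef]; exact integral_undef hc
        rw [this] at hppos; exact lt_irrefl 0 hppos
      set F : EuclideanSpace ℝ (Fin d) → ℝ≥0∞ :=
        fun y => ENNReal.ofReal (‖y‖ * ‖g (x - σ • y)‖) with hFdef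
      set H : EuclideanSpace ℝ (Fin d) → ℝ≥0∞ :=
        fun y => ENNReal.ofReal (p₀ (x - σ • y)) with hHdef
      set Φ : EuclideanSpace ℝ (Fin d) → ℝ≥0∞ :=
        fun y => ENNReal.ofReal (φ y) with hΦdef
      have hxy : Measurable fun y : EuclideanSpace ℝ (Fin d) => x - σ • y := by fun_prop
      have hFm : Measurable F :=
        (continuous_norm.measurable.mul
          ((hgc.comp (by fun_prop)).norm.measurable)).ennreal_ofReal
      have hHm : Measurable H := ((hp₀c.measurable).comp hxy).ennreal_ofReal
      have hΦm : Measurable Φ := hφm.ennreal_ofReal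
      have hHtop : ∀ y, H y ≠ ∞ := fun y => ENNReal.ofReal_ne_top
      have hΦ0 : ∀ y, Φ y ≠ 0 := fun y => by
        simp only [hΦdef, ne_eq, ENNReal.ofReal_eq_zero, not_le]; exact hφpos y
      have hΦtop : ∀ y, Φ y ≠ ∞ := fun y => ENNReal.ofReal_ne_top
      have hFH0 : ∀ y, H y = 0 → F y = 0 := by
        intro y h0
        have : p₀ (x - σ • y) = 0 :=
          le_antisymm (by simpa [hHdef, ENNReal.ofReal_eq_zero] using h0) (hp0 _)
        rw [hFdef]
        simp [hgz _ this]
      have hpenn : ENNReal.ofReal p = ∫⁻ y, H y * Φ y := by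
        rw [hpdef, ofReal_integral_eq_lintegral_ofReal hInt
          (Filter.Eventually.of_forall fun y => mul_nonneg (hp0 _) (hφpos y).le)]
        exact lintegral_congr fun y => ENNReal.ofReal_mul (hp0 _)
      -- step 1 : |D| bounded by lintegral of F * Φ
      have step1 : ENNReal.ofReal |D| ≤ ∫⁻ y, F y * Φ y := by
        have h1 := norm_integral_le_lintegral_norm (μ := volume)
          (fun y => ⟪y, g (x - σ • y)⟫ * φ y)
        rw [Real.norm_eq_abs] at h1
        calc ENNReal.ofReal |D| ≤
            ENNReal.ofReal (∫⁻ y, ENNReal.ofReal ‖⟪y, g (x - σ • y)⟫ * φ y‖).toReal :=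
              ENNReal.ofReal_le_ofReal h1
          _ ≤ ∫⁻ y, ENNReal.ofReal ‖⟪y, g (x - σ • y)⟫ * φ y‖ := ENNReal.ofReal_toReal_le
          _ ≤ ∫⁻ y, F y * Φ y := by
              refine lintegral_mono fun y => ?_
              rw [Real.norm_eq_abs, abs_mul, abs_of_pos (hφpos y)]
              calc ENNReal.ofReal (|⟪y, g (x - σ • y)⟫| * φ y)
                  ≤ ENNReal.ofReal ((‖y‖ * ‖g (x - σ • y)‖) * φ y) :=
                    ENNReal.ofReal_le_ofReal (mul_le_mul_of_nonneg_right
                      (abs_real_inner_le_norm _ _) (hφpos y).le)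
                _ = F y * Φ y := ENNReal.ofReal_mul
                    (mul_nonneg (norm_nonneg _) (norm_nonneg _))
      -- Hölder setup
      set a : EuclideanSpace ℝ (Fin d) → ℝ≥0∞ :=
        fun y => F y / H y ^ (3/4 : ℝ) * Φ y ^ (1/4 : ℝ) with hadef
      set b : EuclideanSpace ℝ (Fin d) → ℝ≥0∞ :=
        fun y => H y ^ (3/4 : ℝ) * Φ y ^ (3/4 : ℝ) with hbdef
      have ham : Measurable a :=
        (hFm.div ((ENNReal.continuous_rpow_const.measurable).comp hHm)).mul
          ((ENNReal.continuous_rpow_const.measurable).comp hΦm)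
      have hbm : Measurable b :=
        ((ENNReal.continuous_rpow_const.measurable).comp hHm).mul
          ((ENNReal.continuous_rpow_const.measurable).comp hΦm)
      have hab : ∀ y, F y * Φ y = a y * b y := by
        intro y
        rcases eq_or_ne (H y) 0 with h0 | h0
        · simp only [hadef, hbdef, hFH0 y h0, h0]
          rw [ENNReal.zero_rpow_of_pos (by norm_num : (0:ℝ) < 3/4)]
          simp
        · have h1 : H y ^ (3/4 : ℝ) ≠ 0 := by
            simp only [ne_eq, ENNReal.rpow_eq_zero_iff, not_or]
            constructor
            · rintro ⟨h, -⟩; exact h0 h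
            · rintro ⟨h, -⟩; exact hHtop y h
          have h2 : H y ^ (3/4 : ℝ) ≠ ∞ := by
            simp only [ne_eq, ENNReal.rpow_eq_top_iff, not_or]
            constructor
            · rintro ⟨h, -⟩; exact h0 h
            · rintro ⟨h, -⟩; exact hHtop y h
          rw [hadef, hbdef]
          calc F y * Φ y = (F y / H y ^ (3/4:ℝ) * H y ^ (3/4:ℝ)) *
                (Φ y ^ (1/4:ℝ) * Φ y ^ (3/4:ℝ)) := by
                rw [ENNReal.div_mul_cancel h1 h2,
                  ← ENNReal.rpow_add _ _ (hΦ0 y) (hΦtop y)]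
                norm_num
            _ = F y / H y ^ (3/4:ℝ) * Φ y ^ (1/4:ℝ) * (H y ^ (3/4:ℝ) * Φ y ^ (3/4:ℝ)) := by
                ring
      have holder := ENNReal.lintegral_mul_le_Lp_mul_Lq volume
        (p := 4) (q := 4/3) ⟨by norm_num, by norm_num, by norm_num⟩ ham.aemeasurable hbm.aemeasurable
      have ha4 : ∀ y, a y ^ (4 : ℝ) = F y ^ (4 : ℝ) / H y ^ (3 : ℝ) * Φ y := by
        intro y
        rw [hadef]
        rw [ENNReal.mul_rpow_of_nonneg _ _ (by norm_num : (0:ℝ) ≤ 4),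
          ENNReal.div_rpow_of_nonneg _ _ (by norm_num : (0:ℝ) ≤ 4),
          ← ENNReal.rpow_mul, ← ENNReal.rpow_mul]
        norm_num
      have hb43 : ∀ y, b y ^ (4/3 : ℝ) = H y * Φ y := by
        intro y
        rw [hbdef]
        rw [ENNReal.mul_rpow_of_nonneg _ _ (by norm_num : (0:ℝ) ≤ 4/3),
          ← ENNReal.rpow_mul, ← ENNReal.rpow_mul]
        norm_num
      set I1 := ∫⁻ y, a y ^ (4 : ℝ) with hI1def
      have hI2 : ∫⁻ y, b y ^ (4/3 : ℝ) = ENNReal.ofReal p := by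
        rw [hpenn]; exact lintegral_congr fun y => hb43 y
      have hDle : ENNReal.ofReal |D| ≤ I1 ^ (1/4:ℝ) * (ENNReal.ofReal p) ^ (3/4:ℝ) := by
        refine step1.trans ?_
        rw [show (∫⁻ y, F y * Φ y) = ∫⁻ y, (a * b) y from
          lintegral_congr fun y => hab y]
        refine holder.trans ?_
        rw [hI2]
        norm_num
      have step2 : ENNReal.ofReal |D| ^ (4:ℕ) ≤ I1 * (ENNReal.ofReal p) ^ (3:ℕ) := by
        calc ENNReal.ofReal |D| ^ (4:ℕ)
            ≤ (I1 ^ (1/4:ℝ) * (ENNReal.ofReal p) ^ (3/4:ℝ)) ^ (4:ℕ) :=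
              pow_le_pow_left₀ zero_le hDle 4
          _ = I1 * (ENNReal.ofReal p) ^ (3:ℕ) := by
              rw [mul_pow, ← ENNReal.rpow_natCast (I1 ^ (1/4:ℝ)) 4,
                ← ENNReal.rpow_natCast ((ENNReal.ofReal p) ^ (3/4:ℝ)) 4,
                ← ENNReal.rpow_mul, ← ENNReal.rpow_mul,
                ← ENNReal.rpow_natCast (ENNReal.ofReal p) 3]
              norm_num
      have step3 : I1 ≤ G x := by
        rw [hI1def, hGdef]
        refine lintegral_mono fun y => ?_
        rw [ha4 y]
        rcases eq_or_ne (H y) 0 with h0 | h0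
        · rw [hFH0 y h0]
          rw [ENNReal.zero_rpow_of_pos (by norm_num)]
          simp
        · have hp₀pos : 0 < p₀ (x - σ • y) := by
            rcases (hp0 (x - σ • y)).eq_or_lt with h | h
            · exact absurd (by simp [hHdef, ← h]) h0
            · exact h
          apply le_of_eq
          rw [hFdef, hHdef, hΦdef]
          rw [ENNReal.ofReal_rpow_of_nonneg (mul_nonneg (norm_nonneg _) (norm_nonneg _))
              (by norm_num),
            ENNReal.ofReal_rpow_of_nonneg (hp0 _) (by norm_num),
            ← ENNReal.ofReal_div_of_pos (by positivity),
            ← ENNReal.ofReal_mul (by positivity)]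
          congr 1
          rw [hQdef]
          rw [show (4:ℝ) = ((4:ℕ):ℝ) by norm_num, show (3:ℝ) = ((3:ℕ):ℝ) by norm_num,
            Real.rpow_natCast, Real.rpow_natCast]
          field_simp
      -- assemble pointwise bound
      have habs : (-D) ^ 4 = |D| ^ 4 := by
        rcases abs_cases D with ⟨h, -⟩ | ⟨h, -⟩ <;> rw [h] <;> ring
      rw [habs, ENNReal.ofReal_div_of_pos (by positivity),
        ENNReal.ofReal_pow (abs_nonneg D), ENNReal.ofReal_pow hp_nn]
      have hpne0 : ENNReal.ofReal p ≠ 0 := by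
        simp only [ne_eq, ENNReal.ofReal_eq_zero, not_le]; exact hppos
      have hptop : (ENNReal.ofReal p) ^ (3:ℕ) ≠ ∞ :=
        ENNReal.pow_ne_top ENNReal.ofReal_ne_top
      calc ENNReal.ofReal |D| ^ (4:ℕ) / (ENNReal.ofReal p) ^ (3:ℕ)
          ≤ I1 * (ENNReal.ofReal p) ^ (3:ℕ) / (ENNReal.ofReal p) ^ (3:ℕ) :=
            ENNReal.div_le_div_right step2 _
        _ = I1 := by
            rw [mul_div_assoc, ENNReal.div_self (pow_ne_zero 3 hpne0) hptop, mul_one]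
        _ ≤ G x := step3
  -- Fubini computation
  have swap : ∫⁻ x, G x = Benn * Aenn := by
    rw [hGdef]
    have hum : Measurable (Function.uncurry fun x y : EuclideanSpace ℝ (Fin d) =>
        ENNReal.ofReal (‖y‖ ^ 4 * Q (x - σ • y) * φ y)) := by
      apply Measurable.ennreal_ofReal
      apply Measurable.mul
      · apply Measurable.mul
        · exact (continuous_norm.measurable.comp measurable_snd).pow_const 4
        · exact hQm.comp (by fun_prop)
      · exact hφm.comp measurable_snd
    rw [lintegral_lintegral_swap hum.aemeasurable]
    have inner_eq : ∀ y : EuclideanSpace ℝ (Fin d),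
        (∫⁻ x, ENNReal.ofReal (‖y‖ ^ 4 * Q (x - σ • y) * φ y)) =
          ENNReal.ofReal (‖y‖ ^ 4 * φ y) * Aenn := by
      intro y
      have h1 : ∀ x : EuclideanSpace ℝ (Fin d),
          ENNReal.ofReal (‖y‖ ^ 4 * Q (x - σ • y) * φ y) =
            ENNReal.ofReal (‖y‖ ^ 4 * φ y) * ENNReal.ofReal (Q (x - σ • y)) := by
        intro x
        rw [← ENNReal.ofReal_mul (mul_nonneg (by positivity) (hφpos y).le)]
        congr 1
        ring
      simp_rw [h1]
      have hm2 : Measurable fun x : EuclideanSpace ℝ (Fin d) =>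
          ENNReal.ofReal (Q (x - σ • y)) :=
        Measurable.ennreal_ofReal (by exact hQm.comp (by fun_prop))
      rw [lintegral_const_mul _ hm2]
      congr 1
      rw [hAdef]
      exact (measurePreserving_sub_right volume (σ • y)).lintegral_comp
        hQm.ennreal_ofReal
    simp_rw [inner_eq]
    rw [lintegral_mul_const (f := fun y : EuclideanSpace ℝ (Fin d) => ENNReal.ofReal (‖y‖ ^ 4 * φ y))
      _ ((continuous_norm.measurable.pow_const 4).mul hφm).ennreal_ofReal]
  -- final assembly
  have hfnn : ∀ x : EuclideanSpace ℝ (Fin d),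
      0 ≤ (-∫ y, ⟪y, g (x - σ • y)⟫ * φ y) ^ 4 / (∫ y, p₀ (x - σ • y) * φ y) ^ 3 := by
    intro x
    apply div_nonneg (by positivity)
    exact pow_nonneg (integral_nonneg fun y => mul_nonneg (hp0 _) (hφpos y).le) 3
  have hDm : StronglyMeasurable fun x : EuclideanSpace ℝ (Fin d) =>
      ∫ y, ⟪y, g (x - σ • y)⟫ * φ y := by
    apply StronglyMeasurable.integral_prod_right'
      (f := fun z : EuclideanSpace ℝ (Fin d) × EuclideanSpace ℝ (Fin d) =>
        ⟪z.2, g (z.1 - σ • z.2)⟫ * φ z.2)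
    apply Continuous.stronglyMeasurable
    exact (continuous_snd.inner (hgc.comp (by fun_prop))).mul
      ((stdGauss_continuous d).comp continuous_snd)
  have hpm : StronglyMeasurable fun x : EuclideanSpace ℝ (Fin d) =>
      ∫ y, p₀ (x - σ • y) * φ y := by
    apply StronglyMeasurable.integral_prod_right'
      (f := fun z : EuclideanSpace ℝ (Fin d) × EuclideanSpace ℝ (Fin d) =>
        p₀ (z.1 - σ • z.2) * φ z.2)
    apply Continuous.stronglyMeasurable
    exact (hp₀c.comp (by fun_prop)).mul ((stdGauss_continuous d).comp continuous_snd)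
  have hfm : AEStronglyMeasurable (fun x : EuclideanSpace ℝ (Fin d) =>
      (-∫ y, ⟪y, g (x - σ • y)⟫ * φ y) ^ 4 / (∫ y, p₀ (x - σ • y) * φ y) ^ 3) volume := by
    apply Measurable.aestronglyMeasurable
    exact ((hDm.measurable.neg.pow_const 4)).div (hpm.measurable.pow_const 3)
  rw [integral_eq_lintegral_of_nonneg_ae (Filter.Eventually.of_forall hfnn) hfm]
  have h1 : (∫⁻ x, ENNReal.ofReal ((-∫ y, ⟪y, g (x - σ • y)⟫ * φ y) ^ 4 /
      (∫ y, p₀ (x - σ • y) * φ y) ^ 3)) ≤ Benn * Aenn :=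
    le_trans (lintegral_mono key) (le_of_eq swap)
  have hAnn : 0 ≤ ∫ x, Q x := integral_nonneg hQnn
  have hBnn : 0 ≤ ∫ y, ‖y‖ ^ 4 * φ y :=
    integral_nonneg fun y => mul_nonneg (by positivity) (hφpos y).le
  calc (∫⁻ x, ENNReal.ofReal ((-∫ y, ⟪y, g (x - σ • y)⟫ * φ y) ^ 4 /
        (∫ y, p₀ (x - σ • y) * φ y) ^ 3)).toReal
      ≤ (Benn * Aenn).toReal := by
        apply ENNReal.toReal_mono _ h1
        rw [← hA, ← hB]
        exact ENNReal.mul_ne_top ENNReal.ofReal_ne_top ENNReal.ofReal_ne_top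
    _ = (∫ x, Q x) * ∫ y, ‖y‖ ^ 4 * φ y := by
        rw [ENNReal.toReal_mul, ← hA, ← hB, ENNReal.toReal_ofReal hAnn,
          ENNReal.toReal_ofReal hBnn, mul_comm]
end
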